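/- A committee W of size k satisfies q-PSC if and only if W is a possible outcome of the Minimal Demand rule. -/

import Mathlib

open Finset

variable {V C : Type*} [Fintype V] [Fintype C] [DecidableEq V] [DecidableEq C] {m : ℕ}

/-- The `j`-prefix of voter `i`: the set of their `j` most preferred candidates
(candidate ranks are given by `rank i`, smaller rank = more preferred). -/
def prefixSet (rank : V → C ≃ Fin m) (i : V) (j : ℕ) : Finset C :=
  Finset.univ.filter fun c => (rank i c : ℕ) < j

/-- The equivalence class of voters whose `j`-prefix equals `C'`. -/
def eqClass (rank : V → C ≃ Fin m) (j : ℕ) (C' : Finset C) : Finset V :=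
  Finset.univ.filter fun i => prefixSet rank i j = C'

/-- `N'` is a solid coalition supporting `C'`: every voter in `N'` prefers every
candidate in `C'` to every candidate outside `C'`. -/
def Solid (rank : V → C ≃ Fin m) (N' : Finset V) (C' : Finset C) : Prop :=
  ∀ i ∈ N', ∀ c' ∈ C', ∀ c ∉ C', (rank i c' : ℕ) < (rank i c : ℕ)

/-- `W` satisfies `q`-PSC. -/
def PSC (rank : V → C ≃ Fin m) (q : ℝ) (W : Finset C) : Prop :=
  ∀ ℓ : ℕ, 0 < ℓ → ∀ N' : Finset V, ∀ C' : Finset C,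
    Solid rank N' C' → (ℓ : ℝ) * q ≤ (N'.card : ℝ) →
    min ℓ C'.card ≤ (W ∩ C').card

/-- One addition step of the Minimal Demand rule at stage `j`: some equivalence
class with `j`-prefix `C'` has an unmet PSC demand, and a candidate of `C' \ W`
is added. -/
def mdStep (rank : V → C ≃ Fin m) (q : ℝ) (j : ℕ) (W W' : Finset C) : Prop :=
  ∃ C' : Finset C,
    ((W ∩ C').card : ℤ) < min ⌊((eqClass rank j C').card : ℝ) / q⌋ (C'.card : ℤ) ∧
    ∃ c ∈ C', c ∉ W ∧ W' = insert c W

/-- A complete run of stage `j` of the Minimal Demand rule: repeat `mdStep`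
until no further step is possible. -/
def mdStage (rank : V → C ≃ Fin m) (q : ℝ) (j : ℕ) (W W' : Finset C) : Prop :=
  Relation.ReflTransGen (mdStep rank q j) W W' ∧ ∀ W'', ¬ mdStep rank q j W' W''

/-- `W` is a possible outcome of the Minimal Demand rule: starting from `∅`,
run stages `j = 1, …, m` to completion (for some choice of added candidates). -/
def MDOutcome (rank : V → C ≃ Fin m) (q : ℝ) (W : Finset C) : Prop :=
  ∃ f : ℕ → Finset C, f 0 = ∅ ∧
    (∀ j < m, mdStage rank q (j + 1) (f j) (f (j + 1))) ∧ W = f m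

set_option linter.unusedSectionVars false
set_option linter.unusedVariables false

lemma solid_prefix (rank : V → C ≃ Fin m) {N' : Finset V} {C' : Finset C}
    (h : Solid rank N' C') {i : V} (hi : i ∈ N') :
    prefixSet rank i C'.card = C' := by
  ext c
  simp only [prefixSet, mem_filter, mem_univ, true_and]
  constructor
  · intro hlt
    by_contra hc
    have h1 : C'.card ≤ (Finset.Iio (rank i c)).card := by
      apply Finset.card_le_card_of_injOn (fun c' => rank i c')
      · intro c' hc'
        exact Finset.mem_Iio.mpr (by exact_mod_cast h i hi c' hc' c hc)
      · exact fun a _ b _ hab => (rank i).injective hab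
    rw [Fin.card_Iio] at h1
    omega
  · intro hc
    by_contra hge
    push_neg at hge
    have h1 : (Finset.Iio (rank i c)).card ≤ (C'.erase c).card := by
      apply Finset.card_le_card_of_injOn (fun x => (rank i).symm x)
      · intro x hx
        rw [Finset.mem_coe, Finset.mem_Iio] at hx
        have hxC : (rank i).symm x ∈ C' := by
          by_contra hxc
          have h2 := h i hi c hc _ hxc
          rw [Equiv.apply_symm_apply] at h2
          have : (x : ℕ) < (rank i c : ℕ) := hx
          omega
        refine Finset.mem_erase.mpr ⟨?_, hxC⟩
        intro he
        rw [← he, Equiv.apply_symm_apply] at hx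
        exact lt_irrefl _ hx
      · exact fun a _ b _ hab => (rank i).symm.injective hab
    have h2 : (C'.erase c).card = C'.card - 1 := Finset.card_erase_of_mem hc
    have h3 : 0 < C'.card := Finset.card_pos.mpr ⟨c, hc⟩
    rw [Fin.card_Iio, h2] at h1
    omega

lemma solid_eqClass (rank : V → C ≃ Fin m) (j : ℕ) (C' : Finset C) :
    Solid rank (eqClass rank j C') C' := by
  intro i hi c' hc' c hc
  simp only [eqClass, mem_filter, mem_univ, true_and] at hi
  rw [← hi] at hc' hc
  simp only [prefixSet, mem_filter, mem_univ, true_and] at hc' hc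
  omega

lemma prefixSet_top (rank : V → C ≃ Fin m) (i : V) : prefixSet rank i m = univ := by
  ext c; simp [prefixSet, (rank i c).isLt]

lemma eqClass_top (rank : V → C ≃ Fin m) : eqClass rank m univ = univ := by
  ext i; simp [eqClass, prefixSet_top]

lemma mdStep_subset {rank : V → C ≃ Fin m} {q : ℝ} {j : ℕ} {A B : Finset C}
    (h : mdStep rank q j A B) : A ⊆ B := by
  obtain ⟨_, _, c, _, _, rfl⟩ := h
  exact Finset.subset_insert _ _

lemma rtg_subset {rank : V → C ≃ Fin m} {q : ℝ} {j : ℕ} {A B : Finset C}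
    (h : Relation.ReflTransGen (mdStep rank q j) A B) : A ⊆ B := by
  induction h with
  | refl => exact subset_rfl
  | tail _ h2 ih => exact ih.trans (mdStep_subset h2)

/-- Direction MDOutcome → PSC. -/
lemma md_outcome_psc (rank : V → C ≃ Fin m) (q : ℝ) (hq0 : 0 < q)
    (hCm : Fintype.card C = m) (hm : 0 < m) {W : Finset C}
    (hmd : MDOutcome rank q W) : PSC rank q W := by
  obtain ⟨f, hf0, hstage, rfl⟩ := hmd
  intro ℓ hℓ N' C' hsolid hN
  rcases Nat.eq_zero_or_pos C'.card with hC0 | hCpos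
  · simp [hC0]
  set j := C'.card with hj
  have hjm : j ≤ m := by
    rw [hj, ← hCm]
    exact Finset.card_le_card (Finset.subset_univ _)
  have hj1 : 1 ≤ j := hCpos
  -- the stage j terminal property
  have hterm := (hstage (j - 1) (by omega)).2
  rw [show j - 1 + 1 = j by omega] at hterm
  have hsub : f j ⊆ f m := by
    have key : ∀ d, j + d ≤ m → f j ⊆ f (j + d) := by
      intro d
      induction d with
      | zero => intro _; exact subset_rfl
      | succ n ih =>
        intro hdm
        have h1 := ih (by omega)
        have h2 : f (j + n) ⊆ f (j + n + 1) :=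
          rtg_subset (hstage (j + n) (by omega)).1
        exact h1.trans h2
    have := key (m - j) (by omega)
    rwa [show j + (m - j) = m by omega] at this
  -- N' ⊆ eqClass rank j C'
  have hNe : N' ⊆ eqClass rank j C' := by
    intro i hi
    simp only [eqClass, mem_filter, mem_univ, true_and]
    exact solid_prefix rank hsolid hi
  have hE : (ℓ : ℤ) ≤ ⌊((eqClass rank j C').card : ℝ) / q⌋ := by
    rw [Int.le_floor]
    push_cast
    rw [le_div_iff₀ hq0]
    calc (ℓ : ℝ) * q ≤ (N'.card : ℝ) := hN
      _ ≤ ((eqClass rank j C').card : ℝ) := by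
          exact_mod_cast Finset.card_le_card hNe
  by_contra hcon
  push_neg at hcon
  -- (f m ∩ C').card < min ℓ C'.card; derive a possible step at stage j
  have hfj : (f j ∩ C').card < min ℓ C'.card :=
    lt_of_le_of_lt (Finset.card_le_card (Finset.inter_subset_inter hsub subset_rfl)) hcon
  have hlt1 : (f j ∩ C').card < C'.card := lt_of_lt_of_le hfj (min_le_right _ _)
  obtain ⟨c, hcC, hcfj⟩ : ∃ c ∈ C', c ∉ f j := by
    have hss : f j ∩ C' ⊂ C' := by
      refine (Finset.ssubset_iff_of_subset (Finset.inter_subset_right)).mpr ?_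
      by_contra hno
      push_neg at hno
      have : C' ⊆ f j ∩ C' := fun x hx => hno x hx
      have := Finset.card_le_card this
      omega
    obtain ⟨c, hc1, hc2⟩ := Finset.exists_of_ssubset hss
    exact ⟨c, hc1, fun h => hc2 (Finset.mem_inter.mpr ⟨h, hc1⟩)⟩
  apply hterm (insert c (f j))
  refine ⟨C', ?_, c, hcC, hcfj, rfl⟩
  have hℓ' : ((f j ∩ C').card : ℤ) < (ℓ : ℤ) := by
    exact_mod_cast lt_of_lt_of_le hfj (min_le_left _ _)
  refine lt_min (lt_of_lt_of_le hℓ' hE) ?_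
  exact_mod_cast hlt1

/-- From PSC and an available step, there is a step staying inside W. -/
lemma step_in_W (rank : V → C ≃ Fin m) (q : ℝ) (hq0 : 0 < q) {W : Finset C}
    (hPSC : PSC rank q W) {j : ℕ} {A B : Finset C} (hA : A ⊆ W)
    (hstep : mdStep rank q j A B) :
    ∃ c ∈ W, c ∉ A ∧ mdStep rank q j A (insert c A) := by
  obtain ⟨C', hdem, c0, hc0, hc0A, rfl⟩ := hstep
  set E := (eqClass rank j C').card with hE
  set ℓ := (⌊(E : ℝ) / q⌋).toNat with hℓ
  have hfl0 : 0 < ⌊(E : ℝ) / q⌋ := by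
    have h0 : (0 : ℤ) ≤ ((A ∩ C').card : ℤ) := Int.ofNat_nonneg _
    have := lt_of_le_of_lt h0 (lt_of_lt_of_le hdem (min_le_left _ _))
    exact this
  have hℓcast : (ℓ : ℤ) = ⌊(E : ℝ) / q⌋ := Int.toNat_of_nonneg (le_of_lt hfl0)
  have hℓpos : 0 < ℓ := by omega
  have hℓq : (ℓ : ℝ) * q ≤ (E : ℝ) := by
    have h1 : ((ℓ : ℤ) : ℝ) ≤ (E : ℝ) / q := by
      rw [hℓcast]; exact Int.floor_le _
    rw [le_div_iff₀ hq0] at h1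
    exact_mod_cast h1
  have hW := hPSC ℓ hℓpos (eqClass rank j C') C' (solid_eqClass rank j C') hℓq
  have hAlt : (A ∩ C').card < min ℓ C'.card := by
    have h1 : ((A ∩ C').card : ℤ) < min (ℓ : ℤ) (C'.card : ℤ) := by
      rw [hℓcast]; exact hdem
    have h2 : ((A ∩ C').card : ℤ) < ((min ℓ C'.card : ℕ) : ℤ) := by
      push_cast; omega
    exact_mod_cast h2
  have hlt : (A ∩ C').card < (W ∩ C').card := lt_of_lt_of_le hAlt hW
  have hsub : A ∩ C' ⊆ W ∩ C' := Finset.inter_subset_inter hA subset_rfl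
  obtain ⟨c, hc1, hc2⟩ := Finset.exists_of_ssubset
    ((Finset.ssubset_iff_of_subset hsub).mpr (by
      by_contra hno
      push_neg at hno
      have := Finset.card_le_card (fun x hx => hno x hx : W ∩ C' ⊆ A ∩ C')
      omega))
  rw [Finset.mem_inter] at hc1
  have hcA : c ∉ A := fun h => hc2 (Finset.mem_inter.mpr ⟨h, hc1.2⟩)
  exact ⟨c, hc1.1, hcA, C', hdem, c, hc1.2, hcA, rfl⟩

/-- From PSC, each stage can be completed within W. -/
lemma stage_in_W (rank : V → C ≃ Fin m) (q : ℝ) (hq0 : 0 < q) {W : Finset C}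
    (hPSC : PSC rank q W) (j : ℕ) :
    ∀ A ⊆ W, ∃ B, B ⊆ W ∧ mdStage rank q j A B := by
  suffices key : ∀ n, ∀ A ⊆ W, (W \ A).card ≤ n → ∃ B, B ⊆ W ∧ mdStage rank q j A B by
    intro A hA; exact key (W \ A).card A hA le_rfl
  intro n
  induction n with
  | zero =>
    intro A hA hcard
    by_cases h : ∃ B, mdStep rank q j A B
    · obtain ⟨B, hB⟩ := h
      obtain ⟨c, hcW, hcA, _⟩ := step_in_W rank q hq0 hPSC hA hB
      exfalso
      have : c ∈ W \ A := Finset.mem_sdiff.mpr ⟨hcW, hcA⟩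
      have := Finset.card_pos.mpr ⟨c, this⟩
      omega
    · push_neg at h
      exact ⟨A, hA, Relation.ReflTransGen.refl, h⟩
  | succ n ih =>
    intro A hA hcard
    by_cases h : ∃ B, mdStep rank q j A B
    · obtain ⟨B, hB⟩ := h
      obtain ⟨c, hcW, hcA, hstep⟩ := step_in_W rank q hq0 hPSC hA hB
      have hA' : insert c A ⊆ W := Finset.insert_subset hcW hA
      have hcard' : (W \ insert c A).card ≤ n := by
        have h1 : W \ insert c A = (W \ A).erase c := by
          ext x
          simp only [Finset.mem_sdiff, Finset.mem_erase, Finset.mem_insert]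
          tauto
        have h2 : c ∈ W \ A := Finset.mem_sdiff.mpr ⟨hcW, hcA⟩
        rw [h1, Finset.card_erase_of_mem h2]
        omega
      obtain ⟨B', hB'W, hrtg, hterm⟩ := ih (insert c A) hA' hcard'
      exact ⟨B', hB'W, Relation.ReflTransGen.head hstep hrtg, hterm⟩
    · push_neg at h
      exact ⟨A, hA, Relation.ReflTransGen.refl, h⟩

/-- Direction PSC → MDOutcome. -/
lemma psc_md_outcome (rank : V → C ≃ Fin m) (q : ℝ) (k : ℕ) (hq0 : 0 < q)
    (hCm : Fintype.card C = m) (hk : 0 < k) (hkm : k ≤ m)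
    (hfloor : ⌊(Fintype.card V : ℝ) / q⌋ = (k : ℤ))
    {W : Finset C} (hWcard : W.card = k) (hPSC : PSC rank q W) :
    MDOutcome rank q W := by
  have key := stage_in_W rank q hq0 hPSC
  choose! F hFW hFstage using fun j A (h : A ⊆ W) => key j A h
  set f : ℕ → Finset C := fun n => Nat.rec (∅ : Finset C) (fun j A => F (j + 1) A) n with hf
  have hf0 : f 0 = ∅ := rfl
  have hfsucc : ∀ j, f (j + 1) = F (j + 1) (f j) := fun j => rfl
  have hfW : ∀ j, f j ⊆ W := by
    intro j
    induction j with
    | zero => simp [hf0]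
    | succ n ih => rw [hfsucc]; exact hFW (n + 1) (f n) ih
  have hstage : ∀ j, mdStage rank q (j + 1) (f j) (f (j + 1)) := by
    intro j
    rw [hfsucc]
    exact hFstage (j + 1) (f j) (hfW j)
  have hm : 0 < m := lt_of_lt_of_le hk hkm
  refine ⟨f, hf0, fun j _ => hstage j, ?_⟩
  -- show f m = W
  have hsub : f m ⊆ W := hfW m
  by_contra hne
  have hss : f m ⊂ W := lt_of_le_of_ne hsub (fun h => hne h.symm)
  have hcard : (f m).card < k := hWcard ▸ Finset.card_lt_card hss
  -- terminal property at stage m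
  have hterm := (hstage (m - 1)).2
  rw [show m - 1 + 1 = m by omega] at hterm
  -- find a candidate outside f m
  obtain ⟨c, _, hcfm⟩ : ∃ c ∈ (univ : Finset C), c ∉ f m := by
    apply Finset.exists_of_ssubset
    refine (Finset.ssubset_iff_of_subset (Finset.subset_univ _)).mpr ?_
    by_contra hno
    push_neg at hno
    have h1 := Finset.card_le_card (fun x hx => hno x hx : (univ : Finset C) ⊆ f m)
    rw [Finset.card_univ, hCm] at h1
    omega
  apply hterm (insert c (f m))
  refine ⟨univ, ?_, c, Finset.mem_univ c, hcfm, rfl⟩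
  have e1 : ((eqClass rank m univ).card : ℝ) = (Fintype.card V : ℝ) := by
    rw [eqClass_top, Finset.card_univ]
  have e2 : (((univ : Finset C)).card : ℤ) = (m : ℤ) := by
    rw [Finset.card_univ, hCm]
  rw [Finset.inter_univ, e1, hfloor, e2]
  have : ((f m).card : ℤ) < (k : ℤ) := by exact_mod_cast hcard
  omega


/-- a committee `W` of size `k` satisfies `q`-PSC if and only if
`W` is a possible outcome of the Minimal Demand rule. -/
theorem psc_iff_md_outcome (rank : V → C ≃ Fin m) (q : ℝ) (k : ℕ)
    (hkm : k ≤ Fintype.card C)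
    (hql : (Fintype.card V : ℝ) / ((k : ℝ) + 1) < q)
    (hqu : q ≤ (Fintype.card V : ℝ) / (k : ℝ))
    (W : Finset C) (hWcard : W.card = k) :
    PSC rank q W ↔ MDOutcome rank q W := by
  have hk : 0 < k := by
    rcases Nat.eq_zero_or_pos k with rfl | h
    · exfalso
      simp only [Nat.cast_zero, zero_add, div_one, div_zero] at hql hqu
      have : (0 : ℝ) ≤ (Fintype.card V : ℝ) := Nat.cast_nonneg _
      linarith
    · exact h
  have hq0 : 0 < q := lt_of_le_of_lt (by positivity) hql
  have hkq : (k : ℝ) * q ≤ (Fintype.card V : ℝ) := by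
    have := (le_div_iff₀ (by exact_mod_cast hk : (0:ℝ) < (k:ℝ))).mp hqu
    linarith
  have hVpos : 0 < Fintype.card V := by
    have h1 : (0 : ℝ) < (k : ℝ) * q := by positivity
    have h2 : (0 : ℝ) < (Fintype.card V : ℝ) := lt_of_lt_of_le h1 hkq
    exact_mod_cast h2
  obtain ⟨i₀⟩ := Fintype.card_pos_iff.mp hVpos
  have hCm : Fintype.card C = m := by
    rw [Fintype.card_congr (rank i₀), Fintype.card_fin]
  have hkm' : k ≤ m := hCm ▸ hkm
  have hm : 0 < m := lt_of_lt_of_le hk hkm'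
  have hfloor : ⌊(Fintype.card V : ℝ) / q⌋ = (k : ℤ) := by
    rw [Int.floor_eq_iff]
    constructor
    · rw [le_div_iff₀ hq0]; push_cast; linarith
    · rw [div_lt_iff₀ hq0]
      have h2 : (Fintype.card V : ℝ) < ((k : ℝ) + 1) * q := by
        rw [div_lt_iff₀ (by positivity)] at hql
        linarith
      push_cast; linarith
  constructor
  · exact psc_md_outcome rank q k hq0 hCm hk hkm' hfloor hWcard
  · exact md_outcome_psc rank q hq0 hCm hm
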